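/- For any solution of the N-dcmKP hierarchy with dressing function φ = ∑_{n≥0} φ_n k^{−n}, the coefficient φ_0(s,t) satisfies ∂φ_0/∂t_n = −(𝓛^n)_0 for all n ≥ 1 and ∂φ_0/∂s = log p_0, where (𝓛^n)_0 denotes the coefficient of k^0 in 𝓛^n. -/

import Mathlib

noncomputable section
namespace DcmKPPaper

/-- Ring of "functions of `x`, `s` and `t = (t₁, t₂, …)`", modelled as formal
power series: variable `0` is `x`, variable `1` is `s`, variable `n + 1` is
`tₙ` (`n ≥ 1`). -/
abbrev Fn : Type := MvPowerSeries ℕ ℝ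

/-- Formal partial derivative with respect to the `i`-th variable. -/
def D (i : ℕ) (f : Fn) : Fn :=
  fun m => ((m i : ℝ) + 1) * f (m + Finsupp.single i 1)

/-- the variable `x`. -/
def xVar : Fn := MvPowerSeries.X 0
/-- the variable `s`. -/
def sVar : Fn := MvPowerSeries.X 1
/-- the variable `tₙ`. -/
def tVar (n : ℕ) : Fn := MvPowerSeries.X (n + 1)

/-- constant coefficient of a function. -/
def cc (f : Fn) : ℝ := MvPowerSeries.constantCoeff (σ := ℕ) (R := ℝ) f
/-- constant function. -/
def Cc (r : ℝ) : Fn := MvPowerSeries.C (σ := ℕ) (R := ℝ) r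

/-- `exp f`: real exponential of the constant term times the formal
exponential series of the remainder. -/
def expF (f : Fn) : Fn :=
  Real.exp (cc f) • ∑ᶠ n : ℕ, ((Nat.factorial n : ℝ))⁻¹ • (f - Cc (cc f)) ^ n

/-- `log f` for a nonvanishing (positive) function `f`. -/
def logF (f : Fn) : Fn :=
  Cc (Real.log (cc f)) +
    ∑ᶠ n : ℕ, ((-1 : ℝ) ^ n / (n + 1 : ℝ)) • ((cc f)⁻¹ • f - 1) ^ (n + 1)

/-- Generalized binomial coefficient `C(m, k)` for `m : ℤ`. -/
def gch (m : ℤ) (k : ℕ) : ℝ :=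
  (∏ i ∈ Finset.range k, ((m : ℝ) - (i : ℝ))) / (Nat.factorial k : ℝ)

/-- Formal (Laurent-type) series `∑ⱼ aⱼ kʲ` in the variable `k`, encoded by
their coefficient families. -/
abbrev LS : Type := ℤ → Fn

def mulL (f g : LS) : LS := fun j =>
  ∑ᶠ p : ℤ × ℤ, if p.1 + p.2 = j then f p.1 * g p.2 else 0

def oneL : LS := fun j => if j = 0 then 1 else 0
/-- the series `k`. -/
def kVar : LS := fun j => if j = 1 then 1 else 0
/-- the series `k⁻¹`. -/
def kInv : LS := fun j => if j = -1 then 1 else 0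
/-- a function, viewed as a series of order `0`. -/
def cL (f : Fn) : LS := fun j => if j = 0 then f else 0

def powL (f : LS) : ℕ → LS
  | 0 => oneL
  | n + 1 => mulL f (powL f n)

/-- `∂/∂k`. -/
def DkL (f : LS) : LS := fun j => ((j + 1 : ℤ) : ℝ) • f (j + 1)
/-- coefficientwise partial derivative in the `i`-th variable. -/
def DL (i : ℕ) (f : LS) : LS := fun j => D i (f j)

/-- Poisson bracket `{f, g} = (∂f/∂k)(∂g/∂x) - (∂f/∂x)(∂g/∂k)`. -/
def pb (f g : LS) : LS := mulL (DkL f) (DL 0 g) - mulL (DL 0 f) (DkL g)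

/-- part of a series with positive powers of `k`. -/
def posL (f : LS) : LS := fun j => if 0 < j then f j else 0
/-- part of a series with nonnegative powers of `k`. -/
def nonnegL (f : LS) : LS := fun j => if 0 ≤ j then f j else 0

/-- `f · k^{-d}`. -/
def shiftL (d : ℤ) (f : LS) : LS := fun j => f (j + d)

/-- `𝓑ₙ = (𝓛ⁿ)_{>0}`. -/
def BL (L : LS) (n : ℕ) : LS := posL (powL L n)

/-- `log R` for a series `R = r₀ + r₋₁k⁻¹ + ⋯` of order `≤ 0` with
nonvanishing (positive) leading coefficient `r₀`. -/
def logL (f : LS) : LS :=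
  cL (logF (f 0)) +
    ∑ᶠ n : ℕ, ((-1 : ℝ) ^ n / (n + 1 : ℝ)) •
      powL (mulL (cL (Ring.inverse (f 0))) f - oneL) (n + 1)

/-- The part `log 𝓟 - N log k = log(𝓟 k^{-N}) = log p₀ + ∑_{n≥1} 𝔭ₙ k^{-n}`
of `log 𝓟`. -/
def logPreg (N : ℕ) (P : LS) : LS := logL (shiftL (N : ℤ) P)

/-- `{log 𝓟, g} = {log(𝓟k^{-N}), g} + N k⁻¹ ∂g/∂x`
(the contribution of `N log k`). -/
def pbLogP (N : ℕ) (P : LS) (g : LS) : LS :=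
  pb (logPreg N P) g + (N : ℝ) • mulL kInv (DL 0 g)

/-- `𝓛` has the form `k + u₁ + u₂ k⁻¹ + ⋯`. -/
def IsLax (L : LS) : Prop := L 1 = 1 ∧ ∀ j, 1 < j → L j = 0

/-- The equations of the `N`-dcmKP hierarchy:
`∂𝓛/∂tₙ = {𝓑ₙ, 𝓛}` (n ≥ 1), `∂𝓛/∂s = {log 𝓟, 𝓛}`, and
`∂log𝓟/∂tₙ = ∂𝓑ₙ/∂s - {log 𝓟, 𝓑ₙ}`, where
`log 𝓟 = log p₀ + N log k + ∑ 𝔭ₙ k^{-n}` is decomposed as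
`N log k + log(𝓟k^{-N})`. -/
structure DcmKPEqs (N : ℕ) (L P : LS) : Prop where
  ht : ∀ n : ℕ, 1 ≤ n → DL (n + 1) L = pb (BL L n) L
  hs : DL 1 L = pbLogP N P L
  hlog : ∀ n : ℕ, 1 ≤ n →
    DL (n + 1) (logPreg N P) = DL 1 (BL L n) - pbLogP N P (BL L n)

/-- `(𝓛, 𝓟)` is a solution of the `N`-dcmKP hierarchy, with
`𝓟 = p₀kᴺ + ⋯ + p_{N-1}k` a polynomial without constant term and `p₀`
nonvanishing (positive constant term, so that `log p₀` is real). -/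
structure DcmKP (N : ℕ) (L P : LS) : Prop where
  hL : IsLax L
  hPhigh : ∀ j, (N : ℤ) < j → P j = 0
  hPlow : ∀ j, j ≤ 0 → P j = 0
  hp0 : 0 < cc (P (N : ℤ))
  eqs : DcmKPEqs N L P

/-- `(ad f) g = {f, g}`. -/
def adL (f g : LS) : LS := pb f g

/-- `exp(ad f) g`. -/
def expAd (f : LS) (g : LS) : LS := fun j =>
  ∑ᶠ n : ℕ, ((Nat.factorial n : ℝ))⁻¹ • (adL f)^[n] g j

/-- `∇`-type sum `∑_{m≥0} (ad ψ)^m h / (m+1)!`; with `h = ∂φ/∂u` this is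
`∇_{u,ψ} φ`. -/
def nablaSum (ψ h : LS) : LS := fun j =>
  ∑ᶠ n : ℕ, ((Nat.factorial (n + 1) : ℝ))⁻¹ • (adL ψ)^[n] h j

/-- `φ = ∑_{n≥0} φₙ(s,t) k⁻ⁿ` is a dressing function of the solution
`(𝓛, 𝓟)` of the `N`-dcmKP hierarchy: `𝓛 = e^{ad φ} k`,
`∇_{tₙ,φ}φ = 𝓑ₙᶜ = 𝓑ₙ - 𝓛ⁿ`, and `∇_{s,φ}φ = log 𝓟 - log 𝓛ᴺ`
(`= log(𝓟k^{-N}) - N log(𝓛k⁻¹)`, the `N log k` parts cancelling). -/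
structure Dress (N : ℕ) (L P φ : LS) : Prop where
  hsupp : ∀ j, 0 < j → φ j = 0
  hk : L = expAd φ kVar
  hBc : ∀ n : ℕ, 1 ≤ n → nablaSum φ (DL (n + 1) φ) = BL L n - powL L n
  hs : nablaSum φ (DL 1 φ) = logPreg N P - (N : ℝ) • logL (shiftL 1 L)

/-- the series `∑_{n≥1} n tₙ k^{n-1} + x + N s k⁻¹`. -/
def mArg (N : ℕ) : LS := fun j =>
  if j = -1 then (N : ℝ) • sVar
  else if 0 ≤ j then
    ((j + 1 : ℤ) : ℝ) • tVar (j.toNat + 1) + (if j = 0 then xVar else 0)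
  else 0

/-- the Orlov–Schulman function
`𝓜 = e^{ad φ}(∑_{n≥1} n tₙ k^{n-1} + x + N s k⁻¹)`. -/
def MOS (N : ℕ) (φ : LS) : LS := expAd φ (mArg N)

/-- the expansion `∑_{n≥1} n tₙ 𝓛^{n-1} + x + N s 𝓛⁻¹ + ∑_{n≥1} vₙ 𝓛^{-n-1}`
(`Linv` being the multiplicative inverse of `𝓛`). -/
def MExp (N : ℕ) (L Linv : LS) (v : ℕ → Fn) : LS := fun j =>
  (∑ᶠ n : ℕ, ((n + 1 : ℕ) : ℝ) • (tVar (n + 1) * powL L n j)) +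
  (if j = 0 then xVar else 0) +
  (N : ℝ) • (sVar * Linv j) +
  ∑ᶠ n : ℕ, v (n + 1) * powL Linv (n + 2) j




/-! ### Auxiliary lemmas -/

/-- `f` is supported in degrees `≤ a`. -/
def SuppLe (a : ℤ) (f : LS) : Prop := ∀ j, a < j → f j = 0

lemma suppLe_mono {a b : ℤ} (hab : a ≤ b) {f : LS} (hf : SuppLe a f) : SuppLe b f :=
  fun j hj => hf j (by omega)

lemma D_zero (i : ℕ) : D i (0 : Fn) = 0 := by
  funext m
  show ((m i : ℝ) + 1) * (0 : Fn) (m + Finsupp.single i 1) = 0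
  simp [show ∀ m', (0 : Fn) m' = 0 from fun _ => rfl]

lemma mulL_suppLe {a b : ℤ} {f g : LS} (hf : SuppLe a f) (hg : SuppLe b g) :
    SuppLe (a + b) (mulL f g) := by
  intro j hj
  apply finsum_eq_zero_of_forall_eq_zero
  rintro ⟨p, q⟩
  simp only
  split_ifs with h
  · rcases le_or_gt p a with hp | hp
    · rw [hg q (by omega), mul_zero]
    · rw [hf p hp, zero_mul]
  · rfl

lemma DkL_suppLe {a : ℤ} {f : LS} (hf : SuppLe a f) : SuppLe (a - 1) (DkL f) := by
  intro j hj
  show ((j + 1 : ℤ) : ℝ) • f (j + 1) = 0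
  rw [hf (j + 1) (by omega), smul_zero]

lemma DL_suppLe (i : ℕ) {a : ℤ} {f : LS} (hf : SuppLe a f) : SuppLe a (DL i f) := by
  intro j hj
  show D i (f j) = 0
  rw [hf j hj, D_zero]

lemma pb_suppLe {a b : ℤ} {f g : LS} (hf : SuppLe a f) (hg : SuppLe b g) :
    SuppLe (a + b - 1) (pb f g) := by
  intro j hj
  have h1 := mulL_suppLe (DkL_suppLe hf) (DL_suppLe 0 hg)
  have h2 := mulL_suppLe (DL_suppLe 0 hf) (DkL_suppLe hg)
  show mulL (DkL f) (DL 0 g) j - mulL (DL 0 f) (DkL g) j = 0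
  rw [h1 j (by omega), h2 j (by omega), sub_zero]

lemma iter_suppLe {φ h : LS} (hφ : SuppLe 0 φ) (hh : SuppLe 0 h) :
    ∀ n, SuppLe 0 ((adL φ)^[n] h)
  | 0 => hh
  | n + 1 => by
    rw [Function.iterate_succ_apply']
    exact suppLe_mono (by omega) (pb_suppLe hφ (iter_suppLe hφ hh n))

lemma iter_zero {φ h : LS} (hφ : SuppLe 0 φ) (hh : SuppLe 0 h) (n : ℕ) :
    (adL φ)^[n + 1] h 0 = 0 := by
  rw [Function.iterate_succ_apply']
  exact pb_suppLe hφ (iter_suppLe hφ hh n) 0 (by norm_num)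

lemma nablaSum_zero {φ h : LS} (hφ : SuppLe 0 φ) (hh : SuppLe 0 h) :
    nablaSum φ h 0 = h 0 := by
  show (∑ᶠ n : ℕ, ((Nat.factorial (n + 1) : ℝ))⁻¹ • (adL φ)^[n] h 0) = h 0
  rw [finsum_eq_single _ 0]
  · simp [Nat.factorial]
  · intro n hn
    obtain ⟨m, rfl⟩ := Nat.exists_eq_succ_of_ne_zero hn
    rw [iter_zero hφ hh m, smul_zero]

lemma finsum_LS_apply_eq_zero {F : ℕ → LS} (j : ℤ) (h : ∀ n, F n j = 0) :
    (∑ᶠ n, F n) j = 0 := by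
  by_cases hfin : (Function.support F).Finite
  · rw [finsum_eq_sum F hfin]
    rw [Finset.sum_apply]
    exact Finset.sum_eq_zero fun n _ => h n
  · rw [finsum_of_infinite_support hfin]
    rfl

lemma mulL_cL (r : Fn) (f : LS) (j : ℤ) : mulL (cL r) f j = r * f j := by
  show (∑ᶠ p : ℤ × ℤ, if p.1 + p.2 = j then cL r p.1 * f p.2 else 0) = r * f j
  rw [finsum_eq_single _ ((0 : ℤ), j)]
  · simp [cL]
  · rintro ⟨p, q⟩ hpq
    simp only
    split_ifs with h
    · have hp : p ≠ 0 := by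
        rintro rfl
        rw [zero_add] at h
        subst h
        exact hpq rfl
      simp [cL, hp]
    · rfl

lemma oneL_suppLe : SuppLe 0 oneL := by
  intro j hj
  simp [oneL, hj.ne']

lemma powL_suppLe0 {g : LS} (hg : SuppLe (-1) g) : ∀ n, SuppLe 0 (powL g n)
  | 0 => oneL_suppLe
  | n + 1 =>
    suppLe_mono (by omega) (mulL_suppLe hg (powL_suppLe0 hg n))

lemma powL_succ_suppLe {g : LS} (hg : SuppLe (-1) g) (n : ℕ) :
    SuppLe (-1) (powL g (n + 1)) :=
  suppLe_mono (by omega) (mulL_suppLe hg (powL_suppLe0 hg n))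

lemma logF_one : logF (1 : Fn) = 0 := by
  have hcc : cc (1 : Fn) = 1 := map_one _
  unfold logF
  rw [hcc]
  have : (1 : ℝ)⁻¹ • (1 : Fn) - 1 = 0 := by simp
  simp [this, Cc, zero_pow]

lemma logL_zero {f : LS} (hf : SuppLe 0 f) (hu : Ring.inverse (f 0) * f 0 = 1) :
    logL f 0 = logF (f 0) := by
  have hg : SuppLe (-1) (mulL (cL (Ring.inverse (f 0))) f - oneL) := by
    intro j hj
    show mulL (cL (Ring.inverse (f 0))) f j - oneL j = 0
    rw [mulL_cL]
    rcases lt_or_eq_of_le (show (0 : ℤ) ≤ j by omega) with h0 | h0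
    · rw [hf j h0, mul_zero]
      simp [oneL, h0.ne']
    · rw [← h0, hu]
      simp [oneL]
  show cL (logF (f 0)) 0 +
      (∑ᶠ n : ℕ, ((-1 : ℝ) ^ n / (n + 1 : ℝ)) •
        powL (mulL (cL (Ring.inverse (f 0))) f - oneL) (n + 1)) 0 = logF (f 0)
  rw [finsum_LS_apply_eq_zero 0 (fun n => ?_), add_zero]
  · simp [cL]
  · show ((-1 : ℝ) ^ n / (n + 1 : ℝ)) •
        powL (mulL (cL (Ring.inverse (f 0))) f - oneL) (n + 1) 0 = 0
    rw [powL_succ_suppLe hg n 0 (by norm_num), smul_zero]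

/-- for a solution of the `N`-dcmKP hierarchy with dressing
function `φ`, the coefficient `φ₀` satisfies `∂φ₀/∂tₙ = -(𝓛ⁿ)₀` (n ≥ 1) and
`∂φ₀/∂s = log p₀`. -/
theorem dressing_phi0 (N : ℕ) (hN : 0 < N) (L P φ : LS)
    (h : DcmKP N L P) (hφ : Dress N L P φ) :
    (∀ n : ℕ, 1 ≤ n → D (n + 1) (φ 0) = -(powL L n 0)) ∧
    D 1 (φ 0) = logF (P (N : ℤ)) := by
  have hphi0 : SuppLe 0 φ := fun j hj => hφ.hsupp j hj
  constructor
  · intro n hn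
    have h1 := congrFun (hφ.hBc n hn) 0
    rw [nablaSum_zero hphi0 (DL_suppLe (n + 1) hphi0)] at h1
    have h2 : (BL L n - powL L n) 0 = -(powL L n 0) := by
      show posL (powL L n) 0 - powL L n 0 = _
      simp [posL]
    rw [h2] at h1
    exact h1
  · have h1 := congrFun hφ.hs 0
    rw [nablaSum_zero hphi0 (DL_suppLe 1 hphi0)] at h1
    have hPN : IsUnit (P (N : ℤ)) := by
      rw [MvPowerSeries.isUnit_iff_constantCoeff]
      exact isUnit_iff_ne_zero.mpr (ne_of_gt h.hp0)
    have hfP : SuppLe 0 (shiftL (N : ℤ) P) := fun j hj => h.hPhigh (j + N) (by omega)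
    have hfP0 : (shiftL (N : ℤ) P) 0 = P (N : ℤ) := by
      show P (0 + N) = P (N : ℤ); rw [zero_add]
    have hA : logPreg N P 0 = logF (P (N : ℤ)) := by
      show logL (shiftL (N : ℤ) P) 0 = _
      rw [logL_zero hfP (by rw [hfP0]; exact Ring.inverse_mul_cancel _ hPN), hfP0]
    have hfL : SuppLe 0 (shiftL 1 L) := fun j hj => h.hL.2 (j + 1) (by omega)
    have hfL0 : (shiftL 1 L) 0 = 1 := by
      show L (0 + 1) = 1; rw [zero_add]; exact h.hL.1
    have hB : logL (shiftL 1 L) 0 = 0 := by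
      rw [logL_zero hfL (by rw [hfL0]; simp), hfL0, logF_one]
    have h3 : (logPreg N P - (N : ℝ) • logL (shiftL 1 L)) 0 = logF (P (N : ℤ)) := by
      show logPreg N P 0 - (N : ℝ) • logL (shiftL 1 L) 0 = _
      rw [hA, hB, smul_zero, sub_zero]
    rw [h3] at h1
    exact h1

end DcmKPPaper
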